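/- Suppose condition (B_p) holds for some p > 1 and condition (Q_∞) holds. Then there exist m < ∞ and φ > 0 such that P_{x,i}[τ ≤ m] ≥ φ for all i ∈ S and all x ∈ ℤ≥0. -/

import Mathlib

open MeasureTheory Filter Topology Asymptotics
open scoped ENNReal NNReal

/-- A time-homogeneous Markov chain on a measurable state space `E`, encoded via the family
`P z` of laws (on trajectory space) of the chain started at `z`.  The field `markov` is the
time-homogeneous Markov property: conditionally on the event `{ω n = w}` intersected with any
event `B` depending only on the first `n+1` coordinates, the shifted trajectory has law `P w`. -/
structure MChain (E : Type*) [MeasurableSpace E] where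
  P : E → MeasureTheory.Measure (ℕ → E)
  isProb : ∀ z, MeasureTheory.IsProbabilityMeasure (P z)
  init : ∀ z, P z {ω | ω 0 = z} = 1
  markov : ∀ (z : E) (n : ℕ) (w : E) (A B : Set (ℕ → E)), MeasurableSet A →
    (∀ ω ω' : ℕ → E, (∀ k, k ≤ n → ω k = ω' k) → ω ∈ B → ω' ∈ B) →
    P z (B ∩ {ω | ω n = w} ∩ {ω | (fun k => ω (n + k)) ∈ A})
      = P z (B ∩ {ω | ω n = w}) * P w A

namespace MChain

variable {E : Type*} [MeasurableSpace E]

/-- Irreducibility: every state can be reached from every state with positive probability. -/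
def Irreducible (X : MChain E) : Prop := ∀ z w : E, ∃ n : ℕ, X.P z {ω | ω n = w} ≠ 0

/-- Recurrence: from every state, the chain returns to it almost surely. -/
def Recurrent (X : MChain E) : Prop := ∀ z : E, X.P z {ω | ∃ n, 1 ≤ n ∧ ω n = z} = 1

def Transient (X : MChain E) : Prop := ¬ X.Recurrent

/-- The first return time to `z` (with junk value `0`, via `sInf ∅ = 0`, if there is no return). -/
noncomputable def returnTime (z : E) (ω : ℕ → E) : ℕ := sInf {n | 1 ≤ n ∧ ω n = z}

/-- Positive recurrence: recurrent, with finite mean return times. -/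
def PositiveRecurrent (X : MChain E) : Prop :=
  X.Recurrent ∧ ∀ z : E, (∫⁻ ω, (returnTime z ω : ℝ≥0∞) ∂(X.P z)) ≠ ⊤

def NullRecurrent (X : MChain E) : Prop := X.Recurrent ∧ ¬ X.PositiveRecurrent

end MChain

section HalfStrip

variable {S : Type*} [Fintype S] [DecidableEq S] [Nonempty S]
  [MeasurableSpace S] [MeasurableSingletonClass S]

/-- `qhat X x i j` is the probability that the `S`-coordinate moves from `i` to `j` when the
`ℕ`-coordinate is at `x`; this is `q_x(i,j) = Σ_y p(x,i,y,j)` of the paper. -/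
noncomputable def qhat (X : MChain (ℕ × S)) (x : ℕ) (i j : S) : ℝ :=
  (X.P (x, i) {ω | (ω 1).2 = j}).toReal

/-- `stepMoment X k x i = μ_k(x,i) = E[(X_{n+1}-X_n)^k | X_n = x, η_n = i]`. -/
noncomputable def stepMoment (X : MChain (ℕ × S)) (k : ℕ) (x : ℕ) (i : S) : ℝ :=
  ∫ ω, (((ω 1).1 : ℝ) - (x : ℝ)) ^ k ∂(X.P (x, i))

/-- Condition (B_p): uniformly bounded conditional `p`-th moments of the jumps of the
`ℕ`-coordinate (by the Markov property, the conditional moment given `F_n` is a function of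
the current state only). -/
def CondB (X : MChain (ℕ × S)) (p : ℝ) : Prop :=
  ∃ C : ℝ≥0∞, C ≠ ⊤ ∧ ∀ (x : ℕ) (i : S),
    (∫⁻ ω, ENNReal.ofReal (|((ω 1).1 : ℝ) - (x : ℝ)| ^ p) ∂(X.P (x, i))) ≤ C

def IsStochasticMatrix (Q : S → S → ℝ) : Prop :=
  (∀ i j, 0 ≤ Q i j) ∧ ∀ i, (∑ j, Q i j) = 1

def IsIrreducibleMatrix (Q : S → S → ℝ) : Prop :=
  ∀ i j, ∃ n : ℕ, 0 < ((Matrix.of Q) ^ n) i j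

/-- Aperiodicity (for a finite irreducible stochastic matrix, eventual positivity of the
diagonal entries of the powers is equivalent to aperiodicity). -/
def IsAperiodicMatrix (Q : S → S → ℝ) : Prop :=
  ∀ i, ∃ N : ℕ, ∀ n, N ≤ n → 0 < ((Matrix.of Q) ^ n) i i

/-- `pst` is a (strictly positive) stationary distribution for `Q`. -/
def IsStationaryDist (Q : S → S → ℝ) (pst : S → ℝ) : Prop :=
  (∀ i, 0 < pst i) ∧ (∑ i, pst i) = 1 ∧ ∀ j, (∑ i, pst i * Q i j) = pst j

/-- Condition (Q_∞): the transition matrix of the `S`-coordinate converges as `x → ∞` to an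
irreducible stochastic matrix `Q`. -/
def CondQ (X : MChain (ℕ × S)) (Q : S → S → ℝ) : Prop :=
  (∀ i j, Tendsto (fun x : ℕ => qhat X x i j) atTop (nhds (Q i j))) ∧
    IsStochasticMatrix Q ∧ IsIrreducibleMatrix Q

/-- Condition (Q_∞^+): as (Q_∞), with a power-law rate of convergence. -/
def CondQplus (X : MChain (ℕ × S)) (Q : S → S → ℝ) : Prop :=
  (∃ δ₀ : ℝ, 0 < δ₀ ∧ ∀ i j,
      (fun x : ℕ => qhat X x i j - Q i j) =O[atTop] fun x : ℕ => (x : ℝ) ^ (-δ₀)) ∧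
    IsStochasticMatrix Q ∧ IsIrreducibleMatrix Q

/-- Condition (M_C): asymptotically constant drifts, `μ₁(x,i) = d_i + o(1)`. -/
def CondMC (X : MChain (ℕ × S)) (d : S → ℝ) : Prop :=
  ∀ i, Tendsto (fun x : ℕ => stepMoment X 1 x i) atTop (nhds (d i))

/-- Condition (M_L): Lamperti-type drifts, `μ₁(x,i) = c_i/x + o(1/x)`, `μ₂(x,i) = s_i² + o(1)`,
with at least one `s_i²` nonzero. -/
def CondML (X : MChain (ℕ × S)) (c s2 : S → ℝ) : Prop :=
  (∀ i, 0 ≤ s2 i) ∧ (∃ i, s2 i ≠ 0) ∧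
    (∀ i, Tendsto (fun x : ℕ => (x : ℝ) * stepMoment X 1 x i) atTop (nhds (c i))) ∧
    (∀ i, Tendsto (fun x : ℕ => stepMoment X 2 x i) atTop (nhds (s2 i)))

/-- Condition (M_L^+): Lamperti-type drifts with power-law error bounds. -/
def CondMLplus (X : MChain (ℕ × S)) (c s2 : S → ℝ) : Prop :=
  (∀ i, 0 ≤ s2 i) ∧ (∃ i, s2 i ≠ 0) ∧
    ∃ δ₁ : ℝ, 0 < δ₁ ∧ ∀ i,
      ((fun x : ℕ => stepMoment X 1 x i - c i / (x : ℝ)) =O[atTop]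
        fun x : ℕ => (x : ℝ) ^ (-1 - δ₁)) ∧
      ((fun x : ℕ => stepMoment X 2 x i - s2 i) =O[atTop] fun x : ℕ => (x : ℝ) ^ (-δ₁))

/-- Successive visit times `τ_0 < τ_1 < ⋯` of the `S`-coordinate to the distinguished state
`s0` (junk value, via `sInf ∅ = 0`, if there is no such visit). -/
noncomputable def tauSeq (s0 : S) (ω : ℕ → ℕ × S) : ℕ → ℕ
  | 0 => sInf {n | (ω n).2 = s0}
  | m + 1 => sInf {n | tauSeq s0 ω m < n ∧ (ω n).2 = s0}

/-- `τ`, the first positive time at which the `S`-coordinate visits `s0`. -/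
noncomputable def tauRet (s0 : S) (ω : ℕ → ℕ × S) : ℕ :=
  sInf {n | 1 ≤ n ∧ (ω n).2 = s0}

/-- `D_n`, the maximal displacement of the `ℕ`-coordinate during the `n`-th excursion. -/
noncomputable def Dexc (s0 : S) (n : ℕ) (ω : ℕ → ℕ × S) : ℕ :=
  Finset.sup (Finset.Icc (tauSeq s0 ω n) (tauSeq s0 ω (n + 1)))
    fun m => Nat.dist (ω m).1 (ω (tauSeq s0 ω n)).1

/-- `N(n) = max {k : τ_k ≤ n}`. -/
noncomputable def Ncount (s0 : S) (n : ℕ) (ω : ℕ → ℕ × S) : ℕ :=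
  sSup {k | tauSeq s0 ω k ≤ n}

end HalfStrip

/-- `Fdist a t` is the distribution function of the square root of a `Gamma(a,t)` random
variable: `F_{a,t}(x) = ∫_0^x 2 u^{2a-1} e^{-u²/t} / (t^a Γ(a)) du`. -/
noncomputable def Fdist (a t x : ℝ) : ℝ :=
  ∫ u in (0:ℝ)..x, 2 * u ^ (2 * a - 1) * Real.exp (-(u ^ 2) / t) / (t ^ a * Real.Gamma a)

variable {S : Type*} [Fintype S] [DecidableEq S] [Nonempty S]
  [MeasurableSpace S] [MeasurableSingletonClass S]

section Aux

set_option linter.unusedSectionVars false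

variable {S : Type*} [Fintype S] [DecidableEq S] [Nonempty S]
  [MeasurableSpace S] [MeasurableSingletonClass S]

/-- The event of hitting `s0` (in the `S`-coordinate) at some time in `[1, m]`. -/
def hitSet (s0 : S) (m : ℕ) : Set (ℕ → ℕ × S) :=
  {ω | ∃ n, 1 ≤ n ∧ n ≤ m ∧ (ω n).2 = s0}

lemma hitSet_mono (s0 : S) {m m' : ℕ} (h : m ≤ m') : hitSet s0 m ⊆ hitSet s0 m' := by
  rintro ω ⟨n, h1, h2, h3⟩; exact ⟨n, h1, h2.trans h, h3⟩

lemma measurableSet_eval {n : ℕ} {w : ℕ × S} :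
    MeasurableSet {ω : ℕ → ℕ × S | ω n = w} := by
  have h : {ω : ℕ → ℕ × S | ω n = w} = (fun ω : ℕ → ℕ × S => ω n) ⁻¹' {w} := rfl
  rw [h]
  exact (measurable_pi_apply n) (MeasurableSet.singleton w)

lemma measurableSet_hitSet (s0 : S) (m : ℕ) : MeasurableSet (hitSet s0 m) := by
  have : hitSet s0 m = ⋃ n ∈ Finset.Icc 1 m, {ω : ℕ → ℕ × S | (ω n).2 = s0} := by
    ext ω; simp [hitSet, Finset.mem_Icc]
    constructor
    · rintro ⟨n, h1, h2, h3⟩; exact ⟨n, ⟨h1, h2⟩, h3⟩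
    · rintro ⟨n, ⟨h1, h2⟩, h3⟩; exact ⟨n, h1, h2, h3⟩
  rw [this]
  refine MeasurableSet.biUnion (Finset.countable_toSet _) (fun n _ => ?_)
  exact (measurable_snd.comp (measurable_pi_apply n)) (MeasurableSet.singleton s0)

/-- One-step Markov decomposition lower bound. -/
lemma step_bound (X : MChain (ℕ × S)) (z : ℕ × S) (W : Set (ℕ × S))
    (A : Set (ℕ → ℕ × S)) (hA : MeasurableSet A) (ε : ℝ≥0∞)
    (hW : ∀ w ∈ W, ε ≤ X.P w A) :
    ε * X.P z {ω | ω 1 ∈ W} ≤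
      X.P z ({ω | ω 1 ∈ W} ∩ {ω | (fun k => ω (1 + k)) ∈ A}) := by
  have hdisj : ∀ (B : Set (ℕ → ℕ × S)), Pairwise (Function.onFun Disjoint
      (fun w : W => {ω : ℕ → ℕ × S | ω 1 = (w : ℕ × S)} ∩ B)) := by
    intro B w w' hne
    refine Set.disjoint_left.2 ?_
    rintro ω ⟨h1, -⟩ ⟨h2, -⟩
    exact hne (Subtype.coe_injective (h1.symm.trans h2))
  have hmeas : ∀ (w : ℕ × S), MeasurableSet
      ({ω : ℕ → ℕ × S | ω 1 = w} ∩ {ω | (fun k => ω (1 + k)) ∈ A}) := by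
    intro w
    refine measurableSet_eval.inter ?_
    exact measurable_pi_lambda _ (fun k => measurable_pi_apply (1 + k)) hA
  have e1 : {ω : ℕ → ℕ × S | ω 1 ∈ W} ∩ {ω | (fun k => ω (1 + k)) ∈ A}
      = ⋃ w : W, ({ω : ℕ → ℕ × S | ω 1 = (w : ℕ × S)} ∩ {ω | (fun k => ω (1 + k)) ∈ A}) := by
    ext ω; simp only [Set.mem_inter_iff, Set.mem_setOf_eq, Set.mem_iUnion]
    constructor
    · rintro ⟨h1, h2⟩; exact ⟨⟨ω 1, h1⟩, rfl, h2⟩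
    · rintro ⟨w, h1, h2⟩; exact ⟨h1 ▸ w.2, h2⟩
  have e2 : {ω : ℕ → ℕ × S | ω 1 ∈ W}
      = ⋃ w : W, ({ω : ℕ → ℕ × S | ω 1 = (w : ℕ × S)} ∩ Set.univ) := by
    ext ω; simp only [Set.inter_univ, Set.mem_setOf_eq, Set.mem_iUnion]
    constructor
    · intro h1; exact ⟨⟨ω 1, h1⟩, rfl⟩
    · rintro ⟨w, h1⟩; exact h1 ▸ w.2
  have hmark : ∀ w : W, X.P z ({ω : ℕ → ℕ × S | ω 1 = (w : ℕ × S)}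
      ∩ {ω | (fun k => ω (1 + k)) ∈ A})
      = X.P z {ω : ℕ → ℕ × S | ω 1 = (w : ℕ × S)} * X.P (w : ℕ × S) A := by
    intro w
    have := X.markov z 1 w A Set.univ hA (fun _ _ _ h => h)
    simpa [Set.univ_inter] using this
  calc ε * X.P z {ω | ω 1 ∈ W}
      = ε * ∑' w : W, X.P z {ω : ℕ → ℕ × S | ω 1 = (w : ℕ × S)} := by
        rw [e2]
        rw [MeasureTheory.measure_iUnion (hdisj _) (fun w => measurableSet_eval.inter MeasurableSet.univ)]
        simp [Set.inter_univ]
    _ = ∑' w : W, X.P z {ω : ℕ → ℕ × S | ω 1 = (w : ℕ × S)} * ε := by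
        rw [ENNReal.tsum_mul_right, mul_comm]
    _ ≤ ∑' w : W, X.P z {ω : ℕ → ℕ × S | ω 1 = (w : ℕ × S)} * X.P (w : ℕ × S) A := by
        exact ENNReal.tsum_le_tsum (fun w => mul_le_mul_right (hW w w.2) _)
    _ = X.P z ({ω | ω 1 ∈ W} ∩ {ω | (fun k => ω (1 + k)) ∈ A}) := by
        rw [e1, MeasureTheory.measure_iUnion (hdisj _) (fun w => hmeas w)]
        exact tsum_congr (fun w => (hmark w).symm)

/-- Uniform tail bound on downward jumps from (B_p). -/
lemma tail_bound (X : MChain (ℕ × S)) (p : ℝ) (hp : 1 ≤ p) (hB : CondB X p)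
    (δ : ℝ≥0∞) (hδ : δ ≠ 0) :
    ∃ T : ℕ, ∀ (x : ℕ) (i : S), X.P (x, i) {ω | (ω 1).1 + T ≤ x} ≤ δ := by
  rcases eq_or_ne δ ⊤ with rfl | hδt
  · exact ⟨0, fun x i => le_top⟩
  obtain ⟨C, hC, hbd⟩ := hB
  obtain ⟨T₀, hT₀⟩ := ENNReal.exists_nat_gt (ENNReal.div_lt_top hC hδ).ne
  set T := T₀ + 1 with hT
  refine ⟨T, fun x i => ?_⟩
  haveI := X.isProb (x, i)
  set f : (ℕ → ℕ × S) → ℝ≥0∞ :=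
    fun ω => ENNReal.ofReal (|((ω 1).1 : ℝ) - (x : ℝ)| ^ p) with hf
  have hfm : Measurable f := by
    have : f = (fun n : ℕ => ENNReal.ofReal (|(n : ℝ) - (x : ℝ)| ^ p))
        ∘ (fun ω : ℕ → ℕ × S => (ω 1).1) := rfl
    rw [this]
    exact (measurable_of_countable _).comp (measurable_fst.comp (measurable_pi_apply 1))
  have hsub : {ω : ℕ → ℕ × S | (ω 1).1 + T ≤ x}
      ⊆ {ω | ENNReal.ofReal ((T : ℝ) ^ p) ≤ f ω} := by
    intro ω hω
    simp only [Set.mem_setOf_eq] at hω ⊢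
    have h1 : (T : ℝ) ≤ |((ω 1).1 : ℝ) - (x : ℝ)| := by
      have h2 : ((ω 1).1 : ℝ) + (T : ℝ) ≤ (x : ℝ) := by exact_mod_cast hω
      rw [abs_sub_comm]
      have : (T : ℝ) ≤ (x : ℝ) - ((ω 1).1 : ℝ) := by linarith
      exact this.trans (le_abs_self _)
    exact ENNReal.ofReal_le_ofReal
      (Real.rpow_le_rpow (Nat.cast_nonneg T) h1 (by linarith))
  have hkey : ENNReal.ofReal ((T : ℝ) ^ p) * X.P (x, i) {ω | (ω 1).1 + T ≤ x} ≤ C := by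
    calc ENNReal.ofReal ((T : ℝ) ^ p) * X.P (x, i) {ω | (ω 1).1 + T ≤ x}
        ≤ ENNReal.ofReal ((T : ℝ) ^ p)
          * X.P (x, i) {ω | ENNReal.ofReal ((T : ℝ) ^ p) ≤ f ω} :=
          mul_le_mul_right (MeasureTheory.measure_mono hsub) _
      _ ≤ ∫⁻ ω, f ω ∂(X.P (x, i)) :=
          MeasureTheory.mul_meas_ge_le_lintegral₀ hfm.aemeasurable _
      _ ≤ C := hbd x i
  by_contra hcon
  push_neg at hcon
  have hT1 : (1 : ℝ) ≤ (T : ℝ) := by exact_mod_cast Nat.succ_le_succ (Nat.zero_le T₀)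
  have hTle : (T : ℝ≥0∞) ≤ ENNReal.ofReal ((T : ℝ) ^ p) := by
    have : (T : ℝ) ≤ (T : ℝ) ^ p := by
      calc (T : ℝ) = (T : ℝ) ^ (1 : ℝ) := (Real.rpow_one _).symm
        _ ≤ (T : ℝ) ^ p := Real.rpow_le_rpow_of_exponent_le hT1 hp
    calc (T : ℝ≥0∞) = ENNReal.ofReal (T : ℝ) := by
          rw [ENNReal.ofReal_natCast]
      _ ≤ ENNReal.ofReal ((T : ℝ) ^ p) := ENNReal.ofReal_le_ofReal this
  have hCT : C < δ * (T : ℝ≥0∞) := by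
    have h1 : C / δ < (T : ℝ≥0∞) := hT₀.trans_le (Nat.cast_le.2 (Nat.le_succ T₀))
    have h2 := (ENNReal.div_lt_iff (Or.inl hδ) (Or.inl hδt)).1 h1
    rwa [mul_comm] at h2
  have : δ * (T : ℝ≥0∞) < δ * (T : ℝ≥0∞) := by
    calc δ * (T : ℝ≥0∞)
        < X.P (x, i) {ω | (ω 1).1 + T ≤ x} * (T : ℝ≥0∞) := by
          exact ENNReal.mul_lt_mul_left (Nat.cast_ne_zero.2 (Nat.succ_ne_zero T₀))
            (ENNReal.natCast_ne_top T) hcon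
      _ ≤ X.P (x, i) {ω | (ω 1).1 + T ≤ x} * ENNReal.ofReal ((T : ℝ) ^ p) :=
          mul_le_mul_right hTle _
      _ = ENNReal.ofReal ((T : ℝ) ^ p) * X.P (x, i) {ω | (ω 1).1 + T ≤ x} := mul_comm _ _
      _ ≤ C := hkey
      _ < δ * T := hCT
  exact absurd this (lt_irrefl _)

end Aux

section Aux2

set_option linter.unusedSectionVars false

variable {S : Type*} [Fintype S] [DecidableEq S] [Nonempty S]
  [MeasurableSpace S] [MeasurableSingletonClass S]

lemma inf_pos_of_pos {α : Type*} (s : Finset α) (f : α → ℝ≥0∞)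
    (h : ∀ a ∈ s, 0 < f a) : 0 < s.inf f := by
  classical
  induction s using Finset.induction with
  | empty => simp
  | @insert a s hni ih =>
    rw [Finset.inf_insert]
    exact lt_inf_iff.2 ⟨h a (Finset.mem_insert_self a s),
      ih (fun b hb => h b (Finset.mem_insert_of_mem hb))⟩

lemma matrix_pow_nonneg {Q : S → S → ℝ} (hQ : ∀ i j, 0 ≤ Q i j) :
    ∀ (n : ℕ) (i j : S), 0 ≤ ((Matrix.of Q) ^ n) i j := by
  intro n
  induction n with
  | zero =>
    intro i j
    rw [pow_zero, Matrix.one_apply]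
    split <;> norm_num
  | succ n ih =>
    intro i j
    rw [pow_succ, Matrix.mul_apply]
    exact Finset.sum_nonneg (fun k _ => mul_nonneg (ih i k) (hQ k j))

lemma chain_concat {R : S → S → Prop} :
    ∀ (l : List S) (a b : S), List.Chain R a l →
      R ((a :: l).getLast (List.cons_ne_nil a l)) b → List.Chain R a (l ++ [b]) := by
  intro l
  induction l with
  | nil =>
    intro a b _ h
    simp only [List.getLast_singleton] at h
    exact List.Chain.cons h List.Chain.nil
  | cons c l ih =>
    intro a b hch h
    rcases List.chain_cons.1 hch with ⟨h1, h2⟩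
    have h3 : (a :: c :: l).getLast (List.cons_ne_nil _ _)
        = (c :: l).getLast (List.cons_ne_nil _ _) := List.getLast_cons _
    rw [h3] at h
    exact List.Chain.cons h1 (ih c b h2 h)

lemma exists_path_of_pow_pos {Q : S → S → ℝ} (hnn : ∀ i j, 0 ≤ Q i j) :
    ∀ (n : ℕ) (i j : S), 0 < ((Matrix.of Q) ^ n) i j →
      ∃ l : List S, List.Chain (fun a b => 0 < Q a b) i l ∧
        (i :: l).getLast (List.cons_ne_nil i l) = j := by
  intro n
  induction n with
  | zero =>
    intro i j h
    rw [pow_zero, Matrix.one_apply] at h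
    by_cases hij : i = j
    · exact ⟨[], List.Chain.nil, hij⟩
    · simp [hij] at h
  | succ n ih =>
    intro i j h
    rw [pow_succ', Matrix.mul_apply] at h
    have h0 : ∑ k : S, (0 : ℝ) < ∑ k : S, (Matrix.of Q) i k * ((Matrix.of Q) ^ n) k j := by
      simpa using h
    obtain ⟨k, -, hk⟩ := Finset.exists_lt_of_sum_lt h0
    have hQik : 0 < Q i k := by
      rcases lt_or_eq_of_le (hnn i k) with h' | h'
      · exact h'
      · exfalso
        have : (Matrix.of Q) i k = 0 := h'.symm
        rw [this, zero_mul] at hk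
        exact lt_irrefl _ hk
    have hpow : 0 < ((Matrix.of Q) ^ n) k j := by
      rcases lt_or_eq_of_le (matrix_pow_nonneg hnn n k j) with h' | h'
      · exact h'
      · exfalso
        rw [← h', mul_zero] at hk
        exact lt_irrefl _ hk
    obtain ⟨l, hch, hlast⟩ := ih k j hpow
    refine ⟨k :: l, List.Chain.cons hQik hch, ?_⟩
    rw [List.getLast_cons (List.cons_ne_nil k l)]
    exact hlast

lemma exists_path_to (Q : S → S → ℝ) (s0 : S)
    (hst : IsStochasticMatrix Q) (hirr : IsIrreducibleMatrix Q)
    (pst : S → ℝ) (hpst : IsStationaryDist Q pst) :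
    ∀ i : S, ∃ l : List S, List.Chain (fun a b => 0 < Q a b) i l ∧
      l.getLast? = some s0 := by
  intro i
  -- there exists k with Q k s0 > 0
  have hk : ∃ k : S, 0 < Q k s0 := by
    have hsum : ∑ k, pst k * Q k s0 = pst s0 := hpst.2.2 s0
    by_contra hcon
    push_neg at hcon
    have hz : ∀ k : S, pst k * Q k s0 = 0 := by
      intro k
      have h1 : Q k s0 ≤ 0 := hcon k
      have h2 : Q k s0 = 0 := le_antisymm h1 (hst.1 k s0)
      rw [h2, mul_zero]
    rw [Finset.sum_congr rfl (fun k _ => hz k), Finset.sum_const_zero] at hsum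
    exact absurd hsum.symm (ne_of_gt (hpst.1 s0))
  obtain ⟨k, hkpos⟩ := hk
  obtain ⟨n, hn⟩ := hirr i k
  obtain ⟨l, hch, hlast⟩ := exists_path_of_pow_pos hst.1 n i k hn
  refine ⟨l ++ [s0], ?_, List.getLast?_concat⟩
  exact chain_concat l i s0 hch (hlast ▸ hkpos)

/-- Key lemma: along a `Q`-positive path ending at `s0`, for large `x` there is a
uniform lower bound on hitting `s0`. -/
lemma path_lemma (X : MChain (ℕ × S)) (p : ℝ) (hp : 1 < p) (hB : CondB X p)
    (s0 : S) (Q : S → S → ℝ) (hQ : CondQ X Q) :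
    ∀ (l : List S) (i : S), List.Chain (fun a b => 0 < Q a b) i l →
      l.getLast? = some s0 →
      ∃ (φ : ℝ≥0∞) (X0 : ℕ), φ ≠ 0 ∧ ∀ x, X0 ≤ x →
        φ ≤ X.P (x, i) (hitSet s0 l.length) := by
  intro l
  induction l with
  | nil => intro i _ hlast; simp at hlast
  | cons j l' ih =>
    intro i hch hlast
    rcases List.chain_cons.1 hch with ⟨hQij, hch'⟩
    -- eventually qhat x i j ≥ 3/4 Q i j
    have hev : ∀ᶠ x in atTop, 3 / 4 * Q i j < qhat X x i j :=
      (hQ.1 i j).eventually (eventually_gt_nhds (by linarith))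
    obtain ⟨X1, hX1⟩ := eventually_atTop.1 hev
    have hPeq : ∀ x : ℕ, X.P (x, i) {ω | (ω 1).2 = j} = ENNReal.ofReal (qhat X x i j) := by
      intro x
      haveI := X.isProb (x, i)
      rw [qhat, ENNReal.ofReal_toReal (measure_ne_top _ _)]
    cases l' with
    | nil =>
      -- base case: j = s0
      have hj : j = s0 := by simpa using hlast
      rw [← hj]
      refine ⟨ENNReal.ofReal (3 / 4 * Q i j), X1, ?_, ?_⟩
      · simp only [ne_eq, ENNReal.ofReal_eq_zero, not_le]
        linarith
      · intro x hx
        have hsub : {ω : ℕ → ℕ × S | (ω 1).2 = j} ⊆ hitSet j 1 := by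
          intro ω hω
          exact ⟨1, le_refl 1, le_refl 1, hω⟩
        calc ENNReal.ofReal (3 / 4 * Q i j)
            ≤ ENNReal.ofReal (qhat X x i j) :=
              ENNReal.ofReal_le_ofReal (le_of_lt (hX1 x hx))
          _ = X.P (x, i) {ω | (ω 1).2 = j} := (hPeq x).symm
          _ ≤ X.P (x, i) (hitSet j [j].length) := measure_mono (by simp [List.length]; exact hsub)
    | cons a l'' =>
      have hlast' : (a :: l'').getLast? = some s0 := by
        rwa [List.getLast?_cons_cons] at hlast
      obtain ⟨φ', X0', hφ', hbd'⟩ := ih j hch' hlast'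
      -- tail bound with δ = ofReal (Q i j / 4)
      have hδ : ENNReal.ofReal (Q i j / 4) ≠ 0 := by
        simp only [ne_eq, ENNReal.ofReal_eq_zero, not_le]
        linarith
      obtain ⟨T, hT⟩ := tail_bound X p (le_of_lt hp) hB (ENNReal.ofReal (Q i j / 4)) hδ
      refine ⟨φ' * ENNReal.ofReal (Q i j / 2), max X1 (X0' + T), ?_, ?_⟩
      · refine mul_ne_zero hφ' ?_
        simp only [ne_eq, ENNReal.ofReal_eq_zero, not_le]
        linarith
      intro x hx
      have hx1 : X1 ≤ x := le_trans (le_max_left _ _) hx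
      have hx2 : X0' + T ≤ x := le_trans (le_max_right _ _) hx
      set W : Set (ℕ × S) := {w | X0' ≤ w.1 ∧ w.2 = j} with hW
      set A : Set (ℕ → ℕ × S) := hitSet s0 (a :: l'').length with hA
      -- lower bound on P {ω 1 ∈ W}
      have hsplit : {ω : ℕ → ℕ × S | (ω 1).2 = j}
          ⊆ {ω | ω 1 ∈ W} ∪ {ω | (ω 1).1 + T ≤ x} := by
        intro ω hω
        by_cases hc : X0' ≤ (ω 1).1
        · exact Or.inl ⟨hc, hω⟩
        · right
          push_neg at hc
          simp only [Set.mem_setOf_eq]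
          omega
      have hWlb : ENNReal.ofReal (Q i j / 2) ≤ X.P (x, i) {ω | ω 1 ∈ W} := by
        have h1 : X.P (x, i) {ω | (ω 1).2 = j}
            ≤ X.P (x, i) {ω | ω 1 ∈ W} + X.P (x, i) {ω | (ω 1).1 + T ≤ x} :=
          le_trans (measure_mono hsplit) (measure_union_le _ _)
        have h2 : ENNReal.ofReal (3 / 4 * Q i j) ≤ X.P (x, i) {ω | (ω 1).2 = j} := by
          rw [hPeq x]
          exact ENNReal.ofReal_le_ofReal (le_of_lt (hX1 x hx1))
        have h3 : X.P (x, i) {ω | (ω 1).1 + T ≤ x} ≤ ENNReal.ofReal (Q i j / 4) := hT x i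
        have h4 : ENNReal.ofReal (3 / 4 * Q i j) - ENNReal.ofReal (Q i j / 4)
            ≤ X.P (x, i) {ω | ω 1 ∈ W} := by
          rw [tsub_le_iff_right]
          calc ENNReal.ofReal (3 / 4 * Q i j)
              ≤ X.P (x, i) {ω | (ω 1).2 = j} := h2
            _ ≤ X.P (x, i) {ω | ω 1 ∈ W} + X.P (x, i) {ω | (ω 1).1 + T ≤ x} := h1
            _ ≤ X.P (x, i) {ω | ω 1 ∈ W} + ENNReal.ofReal (Q i j / 4) :=
                add_le_add (le_refl _) h3
        refine le_trans ?_ h4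
        rw [← ENNReal.ofReal_sub _ (by linarith : (0:ℝ) ≤ Q i j / 4)]
        exact ENNReal.ofReal_le_ofReal (by linarith)
      -- IH gives bound on each w ∈ W
      have hWA : ∀ w ∈ W, φ' ≤ X.P w A := by
        rintro ⟨y, s⟩ ⟨hy, hs⟩
        simp only at hy hs
        subst hs
        exact hbd' y hy
      have hstep := step_bound X (x, i) W A (measurableSet_hitSet s0 _) φ' hWA
      have hsub2 : {ω : ℕ → ℕ × S | ω 1 ∈ W} ∩ {ω | (fun k => ω (1 + k)) ∈ A}
          ⊆ hitSet s0 (j :: a :: l'').length := by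
        rintro ω ⟨-, h2⟩
        obtain ⟨n, hn1, hn2, hn3⟩ := h2
        refine ⟨1 + n, by omega, ?_, hn3⟩
        simp only [List.length_cons] at hn2 ⊢
        omega
      calc φ' * ENNReal.ofReal (Q i j / 2)
          ≤ φ' * X.P (x, i) {ω | ω 1 ∈ W} := mul_le_mul_right hWlb _
        _ ≤ X.P (x, i) ({ω | ω 1 ∈ W} ∩ {ω | (fun k => ω (1 + k)) ∈ A}) := hstep
        _ ≤ X.P (x, i) (hitSet s0 (j :: a :: l'').length) := measure_mono hsub2

/-- From irreducibility of the chain: every state has some positive-probability hitting time. -/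
lemma small_bound (X : MChain (ℕ × S)) (hirr : X.Irreducible) (s0 : S) :
    ∀ z : ℕ × S, ∃ n : ℕ, 0 < X.P z (hitSet s0 n) := by
  intro z
  obtain ⟨n, hn⟩ := hirr z (z.1 + 1, s0)
  haveI := X.isProb z
  have hn0 : n ≠ 0 := by
    rintro rfl
    apply hn
    have h1 : X.P z {ω | ω 0 = z}ᶜ = 0 := by
      have := X.init z
      rw [measure_compl measurableSet_eval (measure_ne_top _ _), this]
      simp
    refine le_antisymm (le_trans (measure_mono ?_) h1.le) (by simp)
    intro ω hω
    simp only [Set.mem_setOf_eq] at hω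
    simp only [Set.mem_compl_iff, Set.mem_setOf_eq]
    rw [hω]
    intro hc
    have : z.1 + 1 = z.1 := congrArg Prod.fst hc
    omega
  refine ⟨n, ?_⟩
  have hsub : {ω : ℕ → ℕ × S | ω n = (z.1 + 1, s0)} ⊆ hitSet s0 n := by
    intro ω hω
    exact ⟨n, Nat.one_le_iff_ne_zero.2 hn0, le_refl n, by rw [hω]⟩
  exact lt_of_lt_of_le (pos_iff_ne_zero.2 hn) (measure_mono hsub)

end Aux2

/-- Lemma (uniform irreducibility): under (B_p) for some `p > 1` and (Q_∞), there exist
`m < ∞` and `φ > 0` such that `P_{x,i}[τ ≤ m] ≥ φ` for all `x` and `i`, where `τ` is the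
first positive time the `S`-coordinate visits the distinguished state `s0`. -/
theorem stmt8 (X : MChain (ℕ × S)) (hirr : X.Irreducible) (s0 : S)
    (p : ℝ) (hp : 1 < p) (hB : CondB X p)
    (Q : S → S → ℝ) (pst : S → ℝ) (hQ : CondQ X Q) (hpst : IsStationaryDist Q pst) :
    ∃ (m : ℕ) (φ : ℝ), 0 < φ ∧ ∀ (x : ℕ) (i : S),
      ENNReal.ofReal φ ≤ X.P (x, i) {ω | ∃ n, 1 ≤ n ∧ n ≤ m ∧ (ω n).2 = s0} := by
  classical
  have hpath : ∀ i : S, ∃ (φ : ℝ≥0∞) (X0 m : ℕ), φ ≠ 0 ∧ ∀ x, X0 ≤ x →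
      φ ≤ X.P (x, i) (hitSet s0 m) := by
    intro i
    obtain ⟨l, hch, hlast⟩ := exists_path_to Q s0 hQ.2.1 hQ.2.2 pst hpst i
    obtain ⟨φ, X0, hφ, hbd⟩ := path_lemma X p hp hB s0 Q hQ l i hch hlast
    exact ⟨φ, X0, l.length, hφ, hbd⟩
  choose φf X0f mf hφf hbdf using hpath
  choose nf hnf using small_bound X hirr s0
  set X0 : ℕ := Finset.univ.sup X0f with hX0
  set M1 : ℕ := Finset.univ.sup mf with hM1
  set Sm : Finset (ℕ × S) := Finset.range X0 ×ˢ Finset.univ with hSm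
  set M2 : ℕ := Sm.sup nf with hM2
  set m : ℕ := max M1 M2 with hm
  set ε : ℝ≥0∞ := (Finset.univ.inf φf) ⊓ (Sm.inf (fun z => X.P z (hitSet s0 m))) with hε
  have hεpos : 0 < ε := by
    refine lt_inf_iff.2 ⟨inf_pos_of_pos _ _ (fun i _ => pos_iff_ne_zero.2 (hφf i)),
      inf_pos_of_pos _ _ (fun z hz => ?_)⟩
    refine lt_of_lt_of_le (hnf z) (measure_mono (hitSet_mono s0 ?_))
    exact le_trans (Finset.le_sup hz) (le_max_right M1 M2)
  have hmain : ∀ (x : ℕ) (i : S), ε ≤ X.P (x, i) (hitSet s0 m) := by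
    intro x i
    by_cases hx : X0 ≤ x
    · calc ε ≤ Finset.univ.inf φf := inf_le_left
        _ ≤ φf i := Finset.inf_le (Finset.mem_univ i)
        _ ≤ X.P (x, i) (hitSet s0 (mf i)) :=
            hbdf i x (le_trans (Finset.le_sup (Finset.mem_univ i)) hx)
        _ ≤ X.P (x, i) (hitSet s0 m) := measure_mono (hitSet_mono s0
            (le_trans (Finset.le_sup (Finset.mem_univ i)) (le_max_left _ _)))
    · push_neg at hx
      have hz : (x, i) ∈ Sm := Finset.mem_product.2 ⟨Finset.mem_range.2 hx, Finset.mem_univ i⟩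
      calc ε ≤ Sm.inf (fun z => X.P z (hitSet s0 m)) := inf_le_right
        _ ≤ X.P (x, i) (hitSet s0 m) := Finset.inf_le hz
  haveI := X.isProb (0, Classical.arbitrary S)
  have hεtop : ε ≠ ⊤ := by
    have h1 : ε ≤ 1 := le_trans (hmain 0 (Classical.arbitrary S)) prob_le_one
    exact ne_top_of_le_ne_top ENNReal.one_ne_top h1
  refine ⟨m, ε.toReal, ENNReal.toReal_pos hεpos.ne' hεtop, fun x i => ?_⟩
  rw [ENNReal.ofReal_toReal hεtop]
  exact hmain x i
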